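/- Let σ ∈ {1, −1}. Let S ⊆ ℂ be open with 0 ∉ S, and let v : ℂ → ℂ be holomorphic on S and satisfy for all s ∈ S the equation (s⁷/4)·v''(s) + (3/4)·s⁶·v'(s) − 2σ√3·v(s) = 3s·v(s)² + (σ/(4√3))·s⁴. Let W ⊆ ℂ be open and let w : W → ℂ be a holomorphic branch of the square root on W, i.e., w is holomorphic with w(z)² = z and w(z) ≠ 0 for all z ∈ W, and assume 1/w(z) ∈ S for all z ∈ W. Define Ω(z) := σ·w(z)/√3 + v(1/w(z)). Then Ω is holomorphic on W and satisfies the Painlevé I equation Ω''(z) = 3Ω(z)² − z for all z ∈ W. -/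

import Mathlib

/-- Converse direction: from a solution `v` of the remainder equation
and a holomorphic branch `w` of the square root, the function
`Ω(z) = σ w(z)/√3 + v(1/w(z))` is holomorphic and solves Painlevé I. -/
theorem painleveI_from_remainder
    (σ : ℂ) (hσ : σ = 1 ∨ σ = -1)
    (S : Set ℂ) (hS : IsOpen S) (h0 : (0 : ℂ) ∉ S)
    (v : ℂ → ℂ) (hv : DifferentiableOn ℂ v S)
    (hveq : ∀ s ∈ S,
      s ^ 7 / 4 * deriv (deriv v) s + 3 / 4 * s ^ 6 * deriv v s -
          2 * σ * (Real.sqrt 3 : ℂ) * v s =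
        3 * s * v s ^ 2 + σ / (4 * (Real.sqrt 3 : ℂ)) * s ^ 4)
    (W : Set ℂ) (hW : IsOpen W)
    (w : ℂ → ℂ) (hw : DifferentiableOn ℂ w W)
    (hsq : ∀ z ∈ W, w z ^ 2 = z) (hwne : ∀ z ∈ W, w z ≠ 0)
    (hwS : ∀ z ∈ W, (w z)⁻¹ ∈ S) :
    DifferentiableOn ℂ
      (fun z : ℂ => σ * w z / (Real.sqrt 3 : ℂ) + v (w z)⁻¹) W ∧
    ∀ z ∈ W,
      deriv (deriv (fun z : ℂ => σ * w z / (Real.sqrt 3 : ℂ) + v (w z)⁻¹)) z =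
        3 * (σ * w z / (Real.sqrt 3 : ℂ) + v (w z)⁻¹) ^ 2 - z := by
  set c : ℂ := (Real.sqrt 3 : ℂ) with hc
  have hc2 : c ^ 2 = 3 := by
    rw [hc]; norm_cast
    rw [Real.sq_sqrt] <;> norm_num
  have hcne : c ≠ 0 := by
    intro h; rw [h] at hc2; norm_num at hc2
  have hσ2 : σ ^ 2 = 1 := by rcases hσ with rfl | rfl <;> ring
  have hw' : ∀ z ∈ W, HasDerivAt w (2 * w z)⁻¹ z := by
    intro z hz
    have hd : DifferentiableAt ℂ w z := (hw z hz).differentiableAt (hW.mem_nhds hz)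
    have h1 : HasDerivAt (fun y => w y ^ 2) (2 * w z * deriv w z) z := by
      simpa [mul_comm] using (hd.hasDerivAt.fun_pow 2)
    have h2 : HasDerivAt (fun y => w y ^ 2) 1 z := by
      have he : (fun y => w y ^ 2) =ᶠ[nhds z] id :=
        Filter.eventuallyEq_of_mem (hW.mem_nhds hz) (fun y hy => hsq y hy)
      exact (hasDerivAt_id z).congr_of_eventuallyEq he
    have hval : 2 * w z * deriv w z = 1 := by
      rw [← h1.deriv, h2.deriv]
    have h2w : (2 : ℂ) * w z ≠ 0 := by
      simp [hwne z hz]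
    have hdw : deriv w z = (2 * w z)⁻¹ := by
      rw [inv_eq_one_div, eq_div_iff h2w]; linear_combination hval
    rw [← hdw]; exact hd.hasDerivAt
  have hva : AnalyticOnNhd ℂ v S := hv.analyticOnNhd hS
  have hv1 : DifferentiableOn ℂ (deriv v) S := hva.deriv.differentiableOn
  set Ω : ℂ → ℂ := fun z => σ * w z / c + v (w z)⁻¹ with hΩ
  set F : ℂ → ℂ := fun z =>
    σ * (2 * w z)⁻¹ / c + deriv v (w z)⁻¹ * (-(2 * w z)⁻¹ / w z ^ 2) with hF
  have key : ∀ z ∈ W, HasDerivAt Ω (F z) z := by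
    intro z hz
    have hwz := hw' z hz
    have hg : HasDerivAt (fun y => (w y)⁻¹) (-(2 * w z)⁻¹ / w z ^ 2) z :=
      hwz.inv (hwne z hz)
    have hvd : HasDerivAt v (deriv v (w z)⁻¹) (w z)⁻¹ :=
      ((hv.differentiableAt (hS.mem_nhds (hwS z hz)))).hasDerivAt
    have hcomp : HasDerivAt (fun y => v (w y)⁻¹)
        (deriv v (w z)⁻¹ * (-(2 * w z)⁻¹ / w z ^ 2)) z := hvd.comp z hg
    exact ((hwz.const_mul σ).div_const c).add hcomp
  refine ⟨fun z hz => ((key z hz).differentiableAt).differentiableWithinAt, ?_⟩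
  intro z hz
  have hEq : deriv Ω =ᶠ[nhds z] F :=
    Filter.eventuallyEq_of_mem (hW.mem_nhds hz) (fun y hy => (key y hy).deriv)
  rw [show deriv (deriv Ω) z = deriv F z from Filter.EventuallyEq.deriv_eq hEq]
  have hwz := hw' z hz
  have hg : HasDerivAt (fun y => (w y)⁻¹) (-(2 * w z)⁻¹ / w z ^ 2) z :=
    hwz.inv (hwne z hz)
  have h2wne : (2 : ℂ) * w z ≠ 0 := by simp [hwne z hz]
  have hA : HasDerivAt (fun y => deriv v (w y)⁻¹)
      (deriv (deriv v) (w z)⁻¹ * (-(2 * w z)⁻¹ / w z ^ 2)) z :=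
    by
      have h := (hv1.differentiableAt (hS.mem_nhds (hwS z hz))).hasDerivAt
      exact h.comp z hg
  have hB : HasDerivAt (fun y => -(2 * w y)⁻¹ / w y ^ 2)
      ((-(-(2 * (2 * w z)⁻¹) / (2 * w z) ^ 2) * w z ^ 2 -
        -(2 * w z)⁻¹ * (↑2 * w z ^ 1 * (2 * w z)⁻¹)) / (w z ^ 2) ^ 2) z :=
    ((hwz.const_mul 2).inv h2wne).neg.div (hwz.pow 2) (pow_ne_zero 2 (hwne z hz))
  have ht1 : HasDerivAt (fun y => σ * (2 * w y)⁻¹ / c)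
      (σ * (-(2 * (2 * w z)⁻¹) / (2 * w z) ^ 2) / c) z :=
    (((hwz.const_mul 2).inv h2wne).const_mul σ).div_const c
  have hFd := ht1.add (hA.mul hB)
  rw [show deriv F z = _ from hFd.deriv]
  have ha : w z ≠ 0 := hwne z hz
  have hD : σ * (-(2 * (2 * w z)⁻¹) / (2 * w z) ^ 2) / c +
      (deriv (deriv v) (w z)⁻¹ * (-(2 * w z)⁻¹ / w z ^ 2) * (-(2 * w z)⁻¹ / w z ^ 2) +
        deriv v (w z)⁻¹ *
          ((-(-(2 * (2 * w z)⁻¹) / (2 * w z) ^ 2) * w z ^ 2 -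
            -(2 * w z)⁻¹ * (2 * w z ^ 1 * (2 * w z)⁻¹)) / (w z ^ 2) ^ 2)) =
      deriv (deriv v) (w z)⁻¹ / (4 * w z ^ 6) + 3 * deriv v (w z)⁻¹ / (4 * w z ^ 5)
        - σ / (4 * c * w z ^ 3) := by
    linear_combination (deriv v (w z)⁻¹ * (w z)⁻¹ ^ 5 / 4 * (w z * (w z)⁻¹ + 3)) *
      (mul_inv_cancel₀ ha)
  rw [hD]
  have H := hveq (w z)⁻¹ (hwS z hz)
  have haz : w z ^ 2 = z := hsq z hz
  linear_combination w z * H +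
    (-(deriv (deriv v) (w z)⁻¹) * (w z)⁻¹ ^ 6 / 4 + 3 * v (w z)⁻¹ ^ 2 +
      σ * c⁻¹ * (w z)⁻¹ ^ 3 / 4 - 3 * deriv v (w z)⁻¹ * (w z)⁻¹ ^ 5 / 4) *
      (mul_inv_cancel₀ ha) +
    (-2 * w z * σ * v (w z)⁻¹ * c - w z ^ 2 * (c * c⁻¹ + 1)) * (mul_inv_cancel₀ hcne) +
    (-3 * w z ^ 2 * c⁻¹ ^ 2) * hσ2 +
    (2 * w z * σ * c⁻¹ * v (w z)⁻¹ + w z ^ 2 * c⁻¹ ^ 2) * hc2 + (-1 : ℂ) * haz
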